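/- Let m ≥ 1 be an integer, β ∈ ℝ, and let Q : (0,∞) → B(L²(ℝⁿ)) be a family of bounded linear operators such that (t Q_t)_{t>0} satisfies off-diagonal estimates of order M > 0 with homogeneity m and constant C₀. Then there exists C > 0 (depending only on n, m, M, β, C₀) such that for every compactly supported continuous f : (0,∞) × ℝⁿ → ℂ, every x ∈ ℝⁿ, every integer j ≥ 0 and every integer k ≥ 1: ∫₀^∞ ∫_{B(x, t^{1/m})} | ∫_{2^{−k−1}t}^{2^{−k}t} Q_{t−s}(1_{C_j(x, 4t^{1/m})} f(s,·))(y) ds |² t^{β − n/m} dy dt ≤ C · 2^{−k(n/m + 1 − β)} · 2^{−2jmM} ∫₀^∞ ‖1_{B(x, 2^{j + k/m + 3} s^{1/m})} f(s,·)‖²_{L²(ℝⁿ)} s^{β − n/m} ds. -/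

import Mathlib

open MeasureTheory Metric Set
open scoped ENNReal NNReal

noncomputable section

attribute [local instance] Classical.propDecidable

abbrev Rn (n : ℕ) := EuclideanSpace ℝ (Fin n)
abbrev L2 (n : ℕ) : Type := Lp ℂ 2 (volume : Measure (Rn n))

/-- The element of `L²(ℝⁿ)` represented by a function (zero if not in `L²`). -/
def toL2 {n : ℕ} (g : Rn n → ℂ) : L2 n :=
  if h : MemLp g 2 (volume : Measure (Rn n)) then h.toLp g else 0

/-- Multiplication of an `L²` function by the indicator function `1_E`. -/
def indL2 {n : ℕ} (E : Set (Rn n)) (u : L2 n) : L2 n :=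
  if hE : MeasurableSet E then MemLp.toLp (E.indicator u) ((Lp.memLp u).indicator hE) else 0

/-- `f` is a compactly supported continuous function on `(0,∞) × ℝⁿ`. -/
def CcOnPos (n : ℕ) (f : ℝ → Rn n → ℂ) : Prop :=
  Continuous (Function.uncurry f) ∧ HasCompactSupport (Function.uncurry f) ∧
    tsupport (Function.uncurry f) ⊆ Ioi (0:ℝ) ×ˢ (univ : Set (Rn n))

/-- Distance between two sets in `ℝⁿ`. -/
def setDist {n : ℕ} (E F : Set (Rn n)) : ℝ := sInf (Set.image2 dist E F)

/-- The family `(T_t)_{t>0}` satisfies (Gaffney-Davies) off-diagonal estimates of order `M`,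
with homogeneity `m` and constant `C₀`. -/
def OffDiag (n : ℕ) (T : ℝ → (L2 n →L[ℂ] L2 n)) (M : ℝ) (m : ℕ) (C₀ : ℝ) : Prop :=
  ∀ E F : Set (Rn n), MeasurableSet E → MeasurableSet F → ∀ t : ℝ, 0 < t → ∀ u : L2 n,
    ‖indL2 E (T t (indL2 F u))‖ ≤ C₀ * (1 + setDist E F ^ (m:ℝ) / t) ^ (-M) * ‖indL2 F u‖

/-- The annuli `C_0(x,r) = B(x,r)`, `C_j(x,r) = B(x,2ʲr) \\ B(x,2^{j-1}r)` for `j ≥ 1`. -/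
def Cann {n : ℕ} (j : ℕ) (x : Rn n) (r : ℝ) : Set (Rn n) :=
  if j = 0 then ball x r else ball x (2^j * r) \ ball x (2^(j-1) * r)

variable {n : ℕ}

lemma indL2_coeFn {E : Set (Rn n)} (hE : MeasurableSet E) (u : L2 n) :
    ⇑(indL2 E u) =ᵐ[(volume : Measure (Rn n))] E.indicator ⇑u := by
  rw [indL2, dif_pos hE]; exact MemLp.coeFn_toLp _

lemma norm_indL2 {E : Set (Rn n)} (hE : MeasurableSet E) (u : L2 n) :
    ‖indL2 E u‖ = (eLpNorm (E.indicator ⇑u) 2 (volume : Measure (Rn n))).toReal := by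
  rw [Lp.norm_def, eLpNorm_congr_ae (indL2_coeFn hE u)]

lemma norm_indL2_le (E : Set (Rn n)) (u : L2 n) : ‖indL2 E u‖ ≤ ‖u‖ := by
  by_cases hE : MeasurableSet E
  · rw [norm_indL2 hE, Lp.norm_def]
    exact ENNReal.toReal_mono (Lp.eLpNorm_ne_top u) (eLpNorm_indicator_le _)
  · rw [indL2, dif_neg hE, norm_zero]; exact norm_nonneg _

lemma norm_indL2_mono {E F : Set (Rn n)} (hE : MeasurableSet E) (hF : MeasurableSet F)
    (h : E ⊆ F) (u : L2 n) : ‖indL2 E u‖ ≤ ‖indL2 F u‖ := by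
  rw [norm_indL2 hE, norm_indL2 hF]
  have h1 : E.indicator ⇑u = E.indicator (F.indicator ⇑u) := by
    rw [Set.indicator_indicator, Set.inter_eq_self_of_subset_left h]
  rw [h1]
  refine ENNReal.toReal_mono ?_ (eLpNorm_indicator_le _)
  exact ne_top_of_le_ne_top (Lp.eLpNorm_ne_top u) (eLpNorm_indicator_le _)

/-- `indL2 E` as a continuous linear map, for measurable `E`. -/
def indCLM (E : Set (Rn n)) (hE : MeasurableSet E) : L2 n →L[ℂ] L2 n := by
  refine LinearMap.mkContinuous
    { toFun := fun u => indL2 E u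
      map_add' := ?_
      map_smul' := ?_ } 1 ?_
  · intro u v
    simp only [indL2, dif_pos hE]
    rw [← MemLp.toLp_add]
    refine MemLp.toLp_congr _ _ ?_
    filter_upwards [Lp.coeFn_add u v] with y hy
    simp only [Pi.add_apply, Set.indicator_apply, hy]
    split <;> simp
  · intro c u
    simp only [indL2, dif_pos hE, RingHom.id_apply]
    rw [← MemLp.toLp_const_smul]
    refine MemLp.toLp_congr _ _ ?_
    filter_upwards [Lp.coeFn_smul c u] with y hy
    simp only [Pi.smul_apply, Set.indicator_apply, hy]
    split <;> simp
  · intro u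
    simpa using norm_indL2_le E u

lemma indCLM_apply {E : Set (Rn n)} (hE : MeasurableSet E) (u : L2 n) :
    indCLM E hE u = indL2 E u := rfl

lemma ofReal_norm_indL2 {E : Set (Rn n)} (hE : MeasurableSet E) (u : L2 n) :
    ENNReal.ofReal ‖indL2 E u‖
      = (∫⁻ y in E, (‖u y‖₊ : ℝ≥0∞) ^ 2 ∂(volume : Measure (Rn n))) ^ (2⁻¹ : ℝ) := by
  have h1 : eLpNorm (E.indicator ⇑u) 2 (volume : Measure (Rn n))
      = (∫⁻ y in E, (‖u y‖₊ : ℝ≥0∞) ^ 2 ∂(volume : Measure (Rn n))) ^ (2⁻¹ : ℝ) := by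
    rw [eLpNorm_eq_lintegral_rpow_enorm_toReal (by norm_num) (by norm_num)]
    simp_rw [enorm_eq_nnnorm]
    have h2 : ∀ y, (‖E.indicator (⇑u) y‖₊ : ℝ≥0∞) ^ (2:ℝ≥0∞).toReal
        = E.indicator (fun y => (‖u y‖₊ : ℝ≥0∞) ^ 2) y := by
      intro y
      simp only [Set.indicator_apply]
      split
      · rw [ENNReal.toReal_ofNat, ← ENNReal.rpow_natCast]; norm_num
      · simp
    simp_rw [h2]
    rw [lintegral_indicator hE]
    norm_num
  have hfin : (∫⁻ y in E, (‖u y‖₊ : ℝ≥0∞) ^ 2 ∂(volume : Measure (Rn n))) ≠ ⊤ := by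
    intro hc
    have h3 : eLpNorm (E.indicator ⇑u) 2 (volume : Measure (Rn n)) = ⊤ := by
      rw [h1, hc, ENNReal.top_rpow_of_pos (by norm_num)]
    exact absurd (h3 ▸ eLpNorm_indicator_le (⇑u)) (by simp [Lp.eLpNorm_ne_top u])
  rw [norm_indL2 hE, h1, ENNReal.ofReal_toReal]
  exact ENNReal.rpow_ne_top_of_nonneg (by norm_num) hfin

lemma sq_ofReal_norm_indL2 {E : Set (Rn n)} (hE : MeasurableSet E) (u : L2 n) :
    (ENNReal.ofReal ‖indL2 E u‖) ^ 2
      = ∫⁻ y in E, (‖u y‖₊ : ℝ≥0∞) ^ 2 ∂(volume : Measure (Rn n)) := by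
  rw [ofReal_norm_indL2 hE, ← ENNReal.rpow_natCast _ 2, ← ENNReal.rpow_mul]
  norm_num

lemma coe_nnnorm_sq_indL2 {E : Set (Rn n)} (hE : MeasurableSet E) (u : L2 n) :
    ((‖indL2 E u‖₊ : ℝ≥0∞)) ^ 2
      = ∫⁻ y in E, (‖u y‖₊ : ℝ≥0∞) ^ 2 ∂(volume : Measure (Rn n)) := by
  rw [← enorm_eq_nnnorm, ← ofReal_norm]; exact sq_ofReal_norm_indL2 hE u

lemma toL2_coeFn {g : Rn n → ℂ} (hg : MemLp g 2 (volume : Measure (Rn n))) :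
    ⇑(toL2 g) =ᵐ[(volume : Measure (Rn n))] g := by
  rw [toL2, dif_pos hg]; exact hg.coeFn_toLp

lemma CcOnPos.cont_slice {f : ℝ → Rn n → ℂ} (hf : CcOnPos n f) (s : ℝ) :
    Continuous (f s) := hf.1.comp (Continuous.prodMk_right s)

lemma CcOnPos.hcs_slice {f : ℝ → Rn n → ℂ} (hf : CcOnPos n f) (s : ℝ) :
    HasCompactSupport (f s) := by
  have hS : IsCompact {y : Rn n | (s, y) ∈ tsupport (Function.uncurry f)} := by
    refine IsCompact.of_isClosed_subset (hf.2.1.image continuous_snd)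
      (isClosed_tsupport _ |>.preimage (Continuous.prodMk_right s)) ?_
    intro y hy
    exact ⟨(s, y), hy, rfl⟩
  refine IsCompact.of_isClosed_subset hS (isClosed_tsupport _) ?_
  refine closure_minimal ?_ (isClosed_tsupport _ |>.preimage (Continuous.prodMk_right s))
  intro y hy
  exact subset_tsupport _ hy

lemma CcOnPos.memLp_slice {f : ℝ → Rn n → ℂ} (hf : CcOnPos n f) (s : ℝ) :
    MemLp (f s) 2 (volume : Measure (Rn n)) :=
  (hf.cont_slice s).memLp_of_hasCompactSupport (hf.hcs_slice s)

lemma setDist_nonneg (E F : Set (Rn n)) : 0 ≤ setDist E F :=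
  Real.sInf_nonneg (by rintro d ⟨a, _, b, _, rfl⟩; exact dist_nonneg)

lemma Cann_measurable (j : ℕ) (x : Rn n) (r : ℝ) : MeasurableSet (Cann j x r) := by
  rw [Cann]; split
  · exact measurableSet_ball
  · exact measurableSet_ball.diff measurableSet_ball

lemma Cann_subset (j : ℕ) (x : Rn n) (r : ℝ) (hr : 0 ≤ r) :
    Cann j x r ⊆ ball x (2^j * r) := by
  rw [Cann]; split
  · rename_i h; subst h; simp
  · exact diff_subset

lemma Cann_nonempty (hn : 1 ≤ n) {j : ℕ} (hj : 1 ≤ j) (x : Rn n) {r : ℝ} (hr : 0 < r) :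
    (Cann j x r).Nonempty := by
  have hjj : j ≠ 0 := by omega
  rw [Cann, if_neg hjj]
  set c : ℝ := 2^(j-1) * r with hc
  have hcpos : 0 < c := by positivity
  refine ⟨x + c • EuclideanSpace.single ⟨0, hn⟩ (1:ℝ), ?_, ?_⟩
  · rw [mem_ball, dist_eq_norm]
    have : x + c • EuclideanSpace.single ⟨0, hn⟩ (1:ℝ) - x = c • EuclideanSpace.single ⟨0, hn⟩ (1:ℝ) := by abel
    rw [this, norm_smul, EuclideanSpace.norm_single]
    simp only [norm_one, mul_one, Real.norm_eq_abs, abs_of_pos hcpos]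
    rw [hc]
    have h2 : (2:ℝ)^(j-1) < 2^j := by
      apply pow_lt_pow_right₀ (by norm_num) (by omega)
    nlinarith
  · rw [mem_ball, dist_eq_norm, not_lt]
    have : x + c • EuclideanSpace.single ⟨0, hn⟩ (1:ℝ) - x = c • EuclideanSpace.single ⟨0, hn⟩ (1:ℝ) := by abel
    rw [this, norm_smul, EuclideanSpace.norm_single]
    simp [abs_of_pos hcpos]

lemma setDist_lower (hn : 1 ≤ n) {j : ℕ} (hj : 1 ≤ j) (x : Rn n) {r : ℝ} (hr : 0 < r) :
    2^j * r ≤ setDist (ball x r) (Cann j x (4 * r)) := by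
  have hjj : j ≠ 0 := by omega
  have hne : (Set.image2 dist (ball x r) (Cann j x (4*r))).Nonempty :=
    Set.Nonempty.image2 ⟨x, mem_ball_self hr⟩ (Cann_nonempty hn hj x (by linarith))
  refine le_csInf hne ?_
  rintro d ⟨a, ha, b, hb, rfl⟩
  rw [Cann, if_neg hjj] at hb
  have hxb : 2^(j-1) * (4*r) ≤ dist x b := by
    have := hb.2; rw [mem_ball'] at this; linarith [not_lt.mp (fun h => this h)]
  have hxa : dist x a < r := by rwa [mem_ball'] at ha
  have key : 2^(j-1) * (4*r) ≤ dist x a + dist a b := le_trans hxb (dist_triangle x a b)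
  have h4 : (2:ℝ)^(j-1) * 4 = 2^(j+1) := by
    rw [show (4:ℝ) = 2^2 by norm_num, ← pow_add]
    congr 1; omega
  have h5 : (2:ℝ)^j + 1 ≤ 2^(j+1) := by
    rw [pow_succ]
    have : (1:ℝ) ≤ 2^j := one_le_pow₀ (by norm_num)
    nlinarith
  nlinarith [dist_nonneg (x := x) (y := a)]

section Main
variable {n : ℕ}

/-- subset of annulus in enlarged ball -/
lemma Cann_subset_bigball {m : ℕ} (hm : 1 ≤ m) {j k : ℕ} {x : Rn n} {t s : ℝ} (ht : 0 < t) (hs : 0 < s)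
    (hst : t ≤ 2 ^ ((k:ℝ) + 1) * s) :
    Cann j x (4 * t ^ ((m:ℝ)⁻¹))
      ⊆ ball x ((2:ℝ) ^ ((j:ℝ) + (k:ℝ)/(m:ℝ) + 3) * s ^ ((m:ℝ)⁻¹)) := by
  have hm0 : (0:ℝ) < m := by exact_mod_cast Nat.cast_pos.mpr hm
  refine (Cann_subset j x _ (by positivity)).trans (ball_subset_ball ?_)
  have h1 : t ^ ((m:ℝ)⁻¹) ≤ (2:ℝ) ^ (((k:ℝ) + 1) * (m:ℝ)⁻¹) * s ^ ((m:ℝ)⁻¹) := by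
    calc t ^ ((m:ℝ)⁻¹) ≤ ((2:ℝ) ^ ((k:ℝ) + 1) * s) ^ ((m:ℝ)⁻¹) :=
          Real.rpow_le_rpow ht.le hst (by positivity)
    _ = (2:ℝ) ^ (((k:ℝ) + 1) * (m:ℝ)⁻¹) * s ^ ((m:ℝ)⁻¹) := by
          rw [Real.mul_rpow (by positivity) hs.le, ← Real.rpow_mul (by norm_num)]
  have h2 : (2:ℝ)^j * (4 * t ^ ((m:ℝ)⁻¹))
      ≤ (2:ℝ) ^ ((j:ℝ) + 2 + ((k:ℝ) + 1) * (m:ℝ)⁻¹) * s ^ ((m:ℝ)⁻¹) := by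
    have : (2:ℝ) ^ ((j:ℝ) + 2 + ((k:ℝ) + 1) * (m:ℝ)⁻¹)
        = (2:ℝ)^j * 4 * (2:ℝ) ^ (((k:ℝ) + 1) * (m:ℝ)⁻¹) := by
      rw [Real.rpow_add (by norm_num), Real.rpow_add (by norm_num)]
      rw [Real.rpow_natCast]
      norm_num
    rw [this]
    have h3 := mul_le_mul_of_nonneg_left h1 (by positivity : (0:ℝ) ≤ (2:ℝ)^j * 4)
    calc (2:ℝ)^j * (4 * t ^ ((m:ℝ)⁻¹)) = (2:ℝ)^j * 4 * t ^ ((m:ℝ)⁻¹) := by ring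
    _ ≤ (2:ℝ)^j * 4 * ((2:ℝ) ^ (((k:ℝ)+1) * (m:ℝ)⁻¹) * s ^ ((m:ℝ)⁻¹)) := h3
    _ = (2:ℝ)^j * 4 * (2:ℝ) ^ (((k:ℝ)+1) * (m:ℝ)⁻¹) * s ^ ((m:ℝ)⁻¹) := by ring
  refine h2.trans (mul_le_mul_of_nonneg_right ?_ (by positivity))
  apply Real.rpow_le_rpow_of_exponent_le (by norm_num)
  have hminv : (m:ℝ)⁻¹ ≤ 1 := by
    rw [inv_le_one_iff₀]; right; exact_mod_cast hm
  have : ((k:ℝ) + 1) * (m:ℝ)⁻¹ = (k:ℝ) * (m:ℝ)⁻¹ + (m:ℝ)⁻¹ := by ring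
  rw [this, div_eq_mul_inv]
  linarith

/-- decay bound from off-diagonal estimate -/
lemma decay_bound (hn : 1 ≤ n) {m : ℕ} (hm : 1 ≤ m) {M : ℝ} (hM : 0 < M)
    {j : ℕ} {x : Rn n} {t τ : ℝ} (ht : 0 < t) (hτ0 : 0 < τ) (hτt : τ ≤ t) :
    (1 + setDist (ball x (t ^ ((m:ℝ)⁻¹))) (Cann j x (4 * t ^ ((m:ℝ)⁻¹))) ^ (m:ℝ) / τ) ^ (-M)
      ≤ (2:ℝ) ^ (-((j:ℝ) * (m:ℝ) * M)) := by
  have hm0 : (0:ℝ) < m := by exact_mod_cast Nat.cast_pos.mpr hm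
  have hrt : (0:ℝ) < t ^ ((m:ℝ)⁻¹) := Real.rpow_pos_of_pos ht _
  set d := setDist (ball x (t ^ ((m:ℝ)⁻¹))) (Cann j x (4 * t ^ ((m:ℝ)⁻¹))) with hd
  have hd0 : 0 ≤ d := setDist_nonneg _ _
  have hX0 : 0 ≤ d ^ (m:ℝ) / τ := div_nonneg (Real.rpow_nonneg hd0 _) hτ0.le
  rcases Nat.eq_zero_or_pos j with hj | hj
  · subst hj
    simp only [Nat.cast_zero, zero_mul, neg_zero, Real.rpow_zero]
    exact Real.rpow_le_one_of_one_le_of_nonpos (by linarith) (by linarith)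
  · have hdl : 2^j * t ^ ((m:ℝ)⁻¹) ≤ d := setDist_lower hn hj x hrt
    have hbase : (2:ℝ) ^ ((j:ℝ) * (m:ℝ)) ≤ 1 + d ^ (m:ℝ) / τ := by
      have h1 : ((2:ℝ)^j * t ^ ((m:ℝ)⁻¹)) ^ (m:ℝ) = (2:ℝ) ^ ((j:ℝ) * (m:ℝ)) * t := by
        rw [Real.mul_rpow (by positivity) hrt.le, ← Real.rpow_natCast (2:ℝ) j,
          ← Real.rpow_mul (by norm_num), ← Real.rpow_mul ht.le]
        rw [inv_mul_cancel₀ (ne_of_gt hm0), Real.rpow_one]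
      have h2 : (2:ℝ) ^ ((j:ℝ) * (m:ℝ)) * t ≤ d ^ (m:ℝ) :=
        h1 ▸ Real.rpow_le_rpow (by positivity) hdl (by positivity)
      have h3 : (2:ℝ) ^ ((j:ℝ) * (m:ℝ)) ≤ d ^ (m:ℝ) / τ := by
        rw [le_div_iff₀ hτ0]
        calc (2:ℝ) ^ ((j:ℝ) * (m:ℝ)) * τ ≤ (2:ℝ) ^ ((j:ℝ) * (m:ℝ)) * t := by
              exact mul_le_mul_of_nonneg_left hτt (by positivity)
        _ ≤ d ^ (m:ℝ) := h2
      linarith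
    have hb0 : (0:ℝ) < (2:ℝ) ^ ((j:ℝ) * (m:ℝ)) := by positivity
    calc (1 + d ^ (m:ℝ) / τ) ^ (-M) ≤ ((2:ℝ) ^ ((j:ℝ) * (m:ℝ))) ^ (-M) := by
          exact Real.rpow_le_rpow_of_nonpos hb0 hbase (by linarith)
    _ = (2:ℝ) ^ (-((j:ℝ) * (m:ℝ) * M)) := by
          rw [← Real.rpow_mul (by norm_num)]; ring_nf

/-- The key pointwise (in `s`) operator norm bound. -/
lemma opbound (hn : 1 ≤ n) {m : ℕ} (hm : 1 ≤ m)
    {Q : ℝ → (L2 n →L[ℂ] L2 n)} {M C₀ : ℝ} (hM : 0 < M)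
    (hod : OffDiag n (fun t => t • Q t) M m C₀)
    {f : ℝ → Rn n → ℂ} (hf : CcOnPos n f) (x : Rn n) (j k : ℕ) (hk : 1 ≤ k)
    {t s : ℝ} (ht : 0 < t)
    (hs : s ∈ Ioo ((2:ℝ) ^ (-(k:ℝ) - 1) * t) ((2:ℝ) ^ (-(k:ℝ)) * t)) :
    ‖indL2 (ball x (t ^ ((m:ℝ)⁻¹)))
        (Q (t - s) (indL2 (Cann j x (4 * t ^ ((m:ℝ)⁻¹))) (toL2 (f s))))‖
      ≤ (2 * (|C₀| + 1) * (2:ℝ) ^ (-((j:ℝ) * (m:ℝ) * M)) / t) *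
        ‖indL2 (ball x ((2:ℝ) ^ ((j:ℝ) + (k:ℝ)/(m:ℝ) + 3) * s ^ ((m:ℝ)⁻¹))) (toL2 (f s))‖ := by
  have hm0 : (0:ℝ) < m := by exact_mod_cast Nat.cast_pos.mpr hm
  have ha0 : (0:ℝ) < (2:ℝ) ^ (-(k:ℝ) - 1) * t := by positivity
  have hs0 : 0 < s := lt_trans ha0 hs.1
  have hbt2 : (2:ℝ) ^ (-(k:ℝ)) ≤ 2⁻¹ := by
    rw [show (2⁻¹:ℝ) = (2:ℝ) ^ (-(1:ℝ)) by
      rw [Real.rpow_neg (by norm_num), Real.rpow_one]]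
    apply Real.rpow_le_rpow_of_exponent_le (by norm_num)
    have : (1:ℝ) ≤ (k:ℝ) := by exact_mod_cast hk
    linarith
  have hst2 : s < t / 2 := by
    calc s < (2:ℝ) ^ (-(k:ℝ)) * t := hs.2
    _ ≤ 2⁻¹ * t := mul_le_mul_of_nonneg_right hbt2 ht.le
    _ = t / 2 := by ring
  set τ := t - s with hτdef
  have hτ0 : 0 < τ := by simp only [hτdef]; linarith
  have hτt : τ ≤ t := by simp only [hτdef]; linarith
  have hτht : t / 2 ≤ τ := by simp only [hτdef]; linarith
  have hst : t ≤ 2 ^ ((k:ℝ) + 1) * s := by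
    have h1 : (2:ℝ) ^ ((k:ℝ)+1) * ((2:ℝ) ^ (-(k:ℝ) - 1) * t) = t := by
      rw [← mul_assoc, ← Real.rpow_add (by norm_num)]
      norm_num
    calc t = (2:ℝ) ^ ((k:ℝ)+1) * ((2:ℝ) ^ (-(k:ℝ) - 1) * t) := h1.symm
    _ ≤ 2 ^ ((k:ℝ) + 1) * s := by
        exact (mul_le_mul_of_nonneg_left hs.1.le (by positivity))
  set Bt : Set (Rn n) := ball x (t ^ ((m:ℝ)⁻¹)) with hBtdef
  set Cj : Set (Rn n) := Cann j x (4 * t ^ ((m:ℝ)⁻¹)) with hCjdef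
  set z : L2 n := indL2 Cj (toL2 (f s)) with hzdef
  set g : ℝ := ‖indL2 (ball x ((2:ℝ) ^ ((j:ℝ) + (k:ℝ)/(m:ℝ) + 3) * s ^ ((m:ℝ)⁻¹))) (toL2 (f s))‖
    with hgdef
  have hzg : ‖z‖ ≤ g := by
    exact norm_indL2_mono (Cann_measurable _ _ _) measurableSet_ball
      (Cann_subset_bigball hm ht hs0 hst) _
  have hodz := hod Bt Cj measurableSet_ball (Cann_measurable _ _ _) τ hτ0 (toL2 (f s))
  simp only [ContinuousLinearMap.smul_apply] at hodz
  -- rewrite the ℝ-smul as ℂ-smul and pull through indL2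
  have hsmul : indL2 Bt (τ • Q τ z) = (τ:ℂ) • indL2 Bt (Q τ z) := by
    rw [RCLike.real_smul_eq_coe_smul (K := ℂ), ← indCLM_apply measurableSet_ball, ← indCLM_apply measurableSet_ball,
      ContinuousLinearMap.map_smul]
    rfl
  rw [hsmul, norm_smul] at hodz
  simp only [Complex.norm_real, Real.norm_eq_abs, abs_of_pos hτ0] at hodz
  set P : ℝ := (1 + setDist Bt Cj ^ (m:ℝ) / τ) ^ (-M) with hPdef
  have hP0 : 0 ≤ P := Real.rpow_nonneg (by
    have := setDist_nonneg Bt Cj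
    have : 0 ≤ setDist Bt Cj ^ (m:ℝ) / τ := div_nonneg (Real.rpow_nonneg this _) hτ0.le
    linarith) _
  have hPle : P ≤ (2:ℝ) ^ (-((j:ℝ) * (m:ℝ) * M)) := decay_bound hn hm hM ht hτ0 hτt
  -- combine
  have hz0 : 0 ≤ ‖z‖ := norm_nonneg _
  have hg0 : 0 ≤ g := le_trans hz0 hzg
  have hC1 : C₀ ≤ |C₀| + 1 := by
    have := le_abs_self C₀; linarith
  have step1 : τ * ‖indL2 Bt (Q τ z)‖ ≤ (|C₀| + 1) * (2:ℝ) ^ (-((j:ℝ) * (m:ℝ) * M)) * g := by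
    calc τ * ‖indL2 Bt (Q τ z)‖ ≤ C₀ * P * ‖z‖ := hodz
    _ ≤ (|C₀| + 1) * P * ‖z‖ := by
        apply mul_le_mul_of_nonneg_right (mul_le_mul_of_nonneg_right hC1 hP0) hz0
    _ ≤ (|C₀| + 1) * (2:ℝ) ^ (-((j:ℝ) * (m:ℝ) * M)) * ‖z‖ := by
        apply mul_le_mul_of_nonneg_right (mul_le_mul_of_nonneg_left hPle (by positivity)) hz0
    _ ≤ (|C₀| + 1) * (2:ℝ) ^ (-((j:ℝ) * (m:ℝ) * M)) * g := by
        apply mul_le_mul_of_nonneg_left hzg (by positivity)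
  have ht2 : 0 < t / 2 := by linarith
  have step2 : ‖indL2 Bt (Q τ z)‖ ≤ ((|C₀| + 1) * (2:ℝ) ^ (-((j:ℝ) * (m:ℝ) * M)) * g) / τ := by
    rw [le_div_iff₀ hτ0]; linarith [step1]
  calc ‖indL2 Bt (Q τ z)‖ ≤ ((|C₀| + 1) * (2:ℝ) ^ (-((j:ℝ) * (m:ℝ) * M)) * g) / τ := step2
  _ ≤ ((|C₀| + 1) * (2:ℝ) ^ (-((j:ℝ) * (m:ℝ) * M)) * g) / (t/2) := by
      apply div_le_div_of_nonneg_left (by positivity) ht2 hτht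
  _ = (2 * (|C₀| + 1) * (2:ℝ) ^ (-((j:ℝ) * (m:ℝ) * M)) / t) * g := by
      field_simp

end Main

section Main2
variable {n : ℕ}

lemma Hval {E : Set (Rn n)} (hE : MeasurableSet E) {g : Rn n → ℂ}
    (hg : MemLp g 2 (volume : Measure (Rn n))) :
    ((‖indL2 E (toL2 g)‖₊ : ℝ≥0∞)) ^ 2
      = ∫⁻ y in E, (‖g y‖₊ : ℝ≥0∞) ^ 2 ∂(volume : Measure (Rn n)) := by
  rw [coe_nnnorm_sq_indL2 hE]
  refine lintegral_congr_ae (ae_restrict_of_ae ?_)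
  filter_upwards [toL2_coeFn hg] with y hy
  rw [hy]

lemma Hmeas {f : ℝ → Rn n → ℂ} (hf : CcOnPos n f) (x : Rn n) (c : ℝ) (m : ℕ) :
    Measurable fun s : ℝ => ∫⁻ y in ball x (c * s ^ ((m:ℝ)⁻¹)),
      (‖f s y‖₊ : ℝ≥0∞) ^ 2 ∂(volume : Measure (Rn n)) := by
  have hR : Measurable fun s : ℝ => c * s ^ ((m:ℝ)⁻¹) :=
    (measurable_id.pow measurable_const).const_mul c
  set F₀ : ℝ × Rn n → ℝ≥0∞ := fun p =>
    {q : ℝ × Rn n | dist q.2 x < c * q.1 ^ ((m:ℝ)⁻¹)}.indicator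
      (fun q => (‖Function.uncurry f q‖₊ : ℝ≥0∞) ^ 2) p with hF₀def
  have hset : MeasurableSet {q : ℝ × Rn n | dist q.2 x < c * q.1 ^ ((m:ℝ)⁻¹)} := by
    exact measurableSet_lt (continuous_dist.comp
      (continuous_snd.prodMk continuous_const) |>.measurable) (hR.comp measurable_fst)
  have hF₀ : Measurable F₀ := by
    refine Measurable.indicator ?_ hset
    exact ((hf.1.measurable.nnnorm).coe_nnreal_ennreal).pow measurable_const
  have key : (fun s : ℝ => ∫⁻ y in ball x (c * s ^ ((m:ℝ)⁻¹)),
      (‖f s y‖₊ : ℝ≥0∞) ^ 2 ∂(volume : Measure (Rn n)))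
      = fun s => ∫⁻ y, F₀ (s, y) ∂(volume : Measure (Rn n)) := by
    funext s
    rw [← lintegral_indicator measurableSet_ball]
    congr 1
  rw [key]
  exact Measurable.lintegral_prod_right (f := fun s y => F₀ (s, y)) hF₀

lemma per_t (hn : 1 ≤ n) {m : ℕ} (hm : 1 ≤ m) (β : ℝ)
    {Q : ℝ → (L2 n →L[ℂ] L2 n)} {M C₀ : ℝ} (hM : 0 < M)
    (hod : OffDiag n (fun t => t • Q t) M m C₀)
    {f : ℝ → Rn n → ℂ} (hf : CcOnPos n f) (x : Rn n) (j k : ℕ) (hk : 1 ≤ k)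
    {t : ℝ} (ht : 0 < t) :
    (∫⁻ y in ball x (t ^ ((m:ℝ)⁻¹)),
        (‖(∫ s in Ioo ((2:ℝ) ^ (-(k:ℝ) - 1) * t) ((2:ℝ) ^ (-(k:ℝ)) * t),
              Q (t - s) (indL2 (Cann j x (4 * t ^ ((m:ℝ)⁻¹))) (toL2 (f s)))) y‖₊ : ℝ≥0∞) ^ 2
          ∂(volume : Measure (Rn n)))
        * ENNReal.ofReal (t ^ (β - (n:ℝ)/(m:ℝ)))
      ≤ ENNReal.ofReal (2 * (|C₀|+1)^2 * ((2:ℝ) ^ (-((j:ℝ) * (m:ℝ) * M)))^2 * (2:ℝ)^(-(k:ℝ)))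
        * (ENNReal.ofReal (t ^ (β - (n:ℝ)/(m:ℝ) - 1))
          * ∫⁻ s in Ioo ((2:ℝ) ^ (-(k:ℝ) - 1) * t) ((2:ℝ) ^ (-(k:ℝ)) * t),
              (‖indL2 (ball x ((2:ℝ) ^ ((j:ℝ) + (k:ℝ)/(m:ℝ) + 3) * s ^ ((m:ℝ)⁻¹)))
                  (toL2 (f s))‖₊ : ℝ≥0∞) ^ 2) := by
  have hm0 : (0:ℝ) < m := by exact_mod_cast Nat.cast_pos.mpr hm
  set w : ℝ := β - (n:ℝ)/(m:ℝ) with hwdef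
  set a : ℝ := (2:ℝ) ^ (-(k:ℝ) - 1) * t with hadef
  set b : ℝ := (2:ℝ) ^ (-(k:ℝ)) * t with hbdef
  set pj : ℝ := (2:ℝ) ^ (-((j:ℝ) * (m:ℝ) * M)) with hpjdef
  set C₁ : ℝ := |C₀| + 1 with hC1def
  have hC1pos : 0 < C₁ := by positivity
  set ct : ℝ := 2 * C₁ * pj / t with hctdef
  have hct0 : 0 ≤ ct := by positivity
  set Bt : Set (Rn n) := ball x (t ^ ((m:ℝ)⁻¹)) with hBtdef
  set G : ℝ → L2 n := fun s => Q (t - s) (indL2 (Cann j x (4 * t ^ ((m:ℝ)⁻¹))) (toL2 (f s)))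
    with hGdef
  set Hnn : ℝ → ℝ≥0∞ := fun s =>
    (‖indL2 (ball x ((2:ℝ) ^ ((j:ℝ) + (k:ℝ)/(m:ℝ) + 3) * s ^ ((m:ℝ)⁻¹)))
        (toL2 (f s))‖₊ : ℝ≥0∞) ^ 2 with hHnndef
  set I2 : ℝ≥0∞ := ∫⁻ s in Ioo a b, Hnn s with hI2def
  have hA : (∫⁻ y in Bt, (‖(∫ s in Ioo a b, G s) y‖₊ : ℝ≥0∞) ^ 2 ∂(volume : Measure (Rn n)))
      = (ENNReal.ofReal ‖indL2 Bt (∫ s in Ioo a b, G s)‖) ^ 2 :=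
    (sq_ofReal_norm_indL2 measurableSet_ball _).symm
  rw [hA]
  by_cases hint : Integrable G ((volume : Measure ℝ).restrict (Ioo a b))
  swap
  · rw [integral_undef hint]
    have h0 : ‖indL2 Bt (0 : L2 n)‖ = 0 :=
      le_antisymm (by simpa using norm_indL2_le Bt 0) (norm_nonneg _)
    rw [h0]
    simp only [ENNReal.ofReal_zero]
    rw [zero_pow (by norm_num), zero_mul]
    exact zero_le
  -- main case
  have hHnn_half : ∀ s, (Hnn s) ^ (2⁻¹:ℝ)
      = ENNReal.ofReal ‖indL2 (ball x ((2:ℝ) ^ ((j:ℝ) + (k:ℝ)/(m:ℝ) + 3) * s ^ ((m:ℝ)⁻¹)))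
          (toL2 (f s))‖ := by
    intro s
    have hrfl : Hnn s = (‖indL2 (ball x ((2:ℝ) ^ ((j:ℝ) + (k:ℝ)/(m:ℝ) + 3) * s ^ ((m:ℝ)⁻¹)))
        (toL2 (f s))‖₊ : ℝ≥0∞) ^ 2 := rfl
    rw [hrfl, ← enorm_eq_nnnorm, ← ofReal_norm, ← ENNReal.rpow_natCast _ 2, ← ENNReal.rpow_mul]
    norm_num
  -- step 1 : norm bound by lintegral
  have hstep1 : ENNReal.ofReal ‖indL2 Bt (∫ s in Ioo a b, G s)‖
      ≤ ENNReal.ofReal ct * ∫⁻ s in Ioo a b, (Hnn s) ^ (2⁻¹:ℝ) := by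
    have hcomm : indL2 Bt (∫ s in Ioo a b, G s)
        = ∫ s in Ioo a b, indCLM Bt measurableSet_ball (G s) := by
      rw [← indCLM_apply (measurableSet_ball), ContinuousLinearMap.integral_comp_comm _ hint]
    rw [hcomm]
    calc ENNReal.ofReal ‖∫ s in Ioo a b, indCLM Bt measurableSet_ball (G s)‖
        ≤ ENNReal.ofReal ((∫⁻ s in Ioo a b,
            ENNReal.ofReal ‖indCLM Bt measurableSet_ball (G s)‖).toReal) :=
          ENNReal.ofReal_le_ofReal (norm_integral_le_lintegral_norm _)
    _ ≤ ∫⁻ s in Ioo a b, ENNReal.ofReal ‖indCLM Bt measurableSet_ball (G s)‖ :=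
          ENNReal.ofReal_toReal_le
    _ ≤ ∫⁻ s in Ioo a b, ENNReal.ofReal ct * (Hnn s) ^ (2⁻¹:ℝ) := by
          refine lintegral_mono_ae ((ae_restrict_iff' measurableSet_Ioo).2
            (Filter.Eventually.of_forall ?_))
          intro s hs
          rw [hHnn_half s, indCLM_apply]
          rw [← ENNReal.ofReal_mul hct0]
          exact ENNReal.ofReal_le_ofReal (opbound hn hm hM hod hf x j k hk ht hs)
    _ = ENNReal.ofReal ct * ∫⁻ s in Ioo a b, (Hnn s) ^ (2⁻¹:ℝ) :=
          lintegral_const_mul' _ _ ENNReal.ofReal_ne_top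
  -- step 2 : Cauchy-Schwarz
  have hHnn_eq : (fun s => Hnn s) = fun s =>
      ∫⁻ y in ball x ((2:ℝ) ^ ((j:ℝ) + (k:ℝ)/(m:ℝ) + 3) * s ^ ((m:ℝ)⁻¹)),
        (‖f s y‖₊ : ℝ≥0∞) ^ 2 ∂(volume : Measure (Rn n)) := by
    funext s
    exact Hval measurableSet_ball (hf.memLp_slice s)
  have hHnn_meas : Measurable Hnn := by
    rw [show Hnn = fun s => Hnn s from rfl, hHnn_eq]
    exact Hmeas hf x _ m
  have hCS : ∫⁻ s in Ioo a b, (Hnn s) ^ (2⁻¹:ℝ)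
      ≤ ((volume : Measure ℝ) (Ioo a b)) ^ (2⁻¹:ℝ) * I2 ^ (2⁻¹:ℝ) := by
    have hconj : Real.HolderConjugate 2 2 := Real.HolderConjugate.two_two
    have h := ENNReal.lintegral_mul_le_Lp_mul_Lq ((volume : Measure ℝ).restrict (Ioo a b))
      hconj (f := fun s => Hnn s ^ (2⁻¹:ℝ)) (g := fun _ => 1)
      ((hHnn_meas.pow measurable_const).aemeasurable) aemeasurable_const
    simp only [Pi.mul_apply, Pi.one_apply, mul_one, ENNReal.one_rpow] at h
    calc ∫⁻ s in Ioo a b, (Hnn s) ^ (2⁻¹:ℝ)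
        ≤ (∫⁻ s in Ioo a b, ((Hnn s) ^ (2⁻¹:ℝ)) ^ (2:ℝ)) ^ (1/(2:ℝ))
          * (∫⁻ _ in Ioo a b, (1:ℝ≥0∞)) ^ (1/(2:ℝ)) := h
    _ = ((volume : Measure ℝ) (Ioo a b)) ^ (2⁻¹:ℝ) * I2 ^ (2⁻¹:ℝ) := by
        have h1 : ∀ s, ((Hnn s) ^ (2⁻¹:ℝ)) ^ (2:ℝ) = Hnn s := by
          intro s
          rw [← ENNReal.rpow_mul]
          norm_num
        simp_rw [h1]
        rw [lintegral_one, Measure.restrict_apply_univ]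
        rw [one_div, hI2def]
        ring
  -- combine squares
  have hsq : (ENNReal.ofReal ‖indL2 Bt (∫ s in Ioo a b, G s)‖) ^ 2
      ≤ (ENNReal.ofReal ct) ^ 2 * ((volume : Measure ℝ) (Ioo a b)) * I2 := by
    calc (ENNReal.ofReal ‖indL2 Bt (∫ s in Ioo a b, G s)‖) ^ 2
        ≤ (ENNReal.ofReal ct * (((volume : Measure ℝ) (Ioo a b)) ^ (2⁻¹:ℝ) * I2 ^ (2⁻¹:ℝ))) ^ 2 := by
          exact pow_le_pow_left' (hstep1.trans (mul_le_mul_right hCS _)) 2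
    _ = (ENNReal.ofReal ct) ^ 2 * (((volume : Measure ℝ) (Ioo a b)) ^ (2⁻¹:ℝ)) ^ 2
          * (I2 ^ (2⁻¹:ℝ)) ^ 2 := by ring
    _ = (ENNReal.ofReal ct) ^ 2 * ((volume : Measure ℝ) (Ioo a b)) * I2 := by
          have h2 : ∀ z : ℝ≥0∞, (z ^ (2⁻¹:ℝ)) ^ 2 = z := by
            intro z
            rw [← ENNReal.rpow_natCast _ 2, ← ENNReal.rpow_mul]
            norm_num
          rw [h2, h2]
  -- volume of Ioo
  have hvol : (volume : Measure ℝ) (Ioo a b) = ENNReal.ofReal ((2:ℝ) ^ (-(k:ℝ) - 1) * t) := by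
    rw [Real.volume_Ioo]
    congr 1
    have h2 : (2:ℝ) ^ (-(k:ℝ)) = (2:ℝ) ^ (-(k:ℝ) - 1) * 2 := by
      rw [← Real.rpow_add_one (by norm_num : (2:ℝ) ≠ 0) (-(k:ℝ) - 1)]
      norm_num
    rw [hbdef, hadef, h2]
    ring
  -- real coefficient identity
  have hcoef : ct^2 * ((2:ℝ) ^ (-(k:ℝ) - 1) * t) * t ^ w
      = (2 * C₁^2 * pj^2 * (2:ℝ)^(-(k:ℝ))) * t ^ (w - 1) := by
    have h2 : (2:ℝ) ^ (-(k:ℝ)) = (2:ℝ) ^ (-(k:ℝ) - 1) * 2 := by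
      rw [← Real.rpow_add_one (by norm_num : (2:ℝ) ≠ 0) (-(k:ℝ) - 1)]
      norm_num
    have htw : t ^ (w - 1) = t ^ w / t := by
      rw [Real.rpow_sub ht, Real.rpow_one]
    rw [hctdef, h2, htw]
    field_simp
  -- final chain
  calc (ENNReal.ofReal ‖indL2 Bt (∫ s in Ioo a b, G s)‖) ^ 2 * ENNReal.ofReal (t ^ w)
      ≤ ((ENNReal.ofReal ct) ^ 2 * ((volume : Measure ℝ) (Ioo a b)) * I2)
          * ENNReal.ofReal (t ^ w) := mul_le_mul_left hsq _
  _ = (ENNReal.ofReal (ct^2) * ENNReal.ofReal ((2:ℝ) ^ (-(k:ℝ) - 1) * t)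
        * ENNReal.ofReal (t ^ w)) * I2 := by
      rw [hvol, ← ENNReal.ofReal_pow hct0]
      ring
  _ = ENNReal.ofReal (ct^2 * ((2:ℝ) ^ (-(k:ℝ) - 1) * t) * t ^ w) * I2 := by
      rw [← ENNReal.ofReal_mul (by positivity), ← ENNReal.ofReal_mul (by positivity)]
  _ = ENNReal.ofReal ((2 * C₁^2 * pj^2 * (2:ℝ)^(-(k:ℝ))) * t ^ (w - 1)) * I2 := by
      rw [hcoef]
  _ = ENNReal.ofReal (2 * C₁^2 * pj^2 * (2:ℝ)^(-(k:ℝ)))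
        * (ENNReal.ofReal (t ^ (w - 1)) * I2) := by
      rw [ENNReal.ofReal_mul (by positivity)]
      ring

end Main2

lemma tail_bound (w : ℝ) (k : ℕ) (H : ℝ → ℝ≥0∞) {s : ℝ} (hs : 0 < s) :
    (∫⁻ t in Ioi (0:ℝ),
      ({p : ℝ × ℝ | (2:ℝ)^(-(k:ℝ)-1)*p.1 < p.2 ∧ p.2 < (2:ℝ)^(-(k:ℝ))*p.1}.indicator
        (fun q => ENNReal.ofReal (q.1 ^ (w-1)) * H q.2) (t, s)))
      ≤ ENNReal.ofReal (max 1 ((2:ℝ)^(w-1)) * (2:ℝ)^((k:ℝ)*(w-1)) * (2:ℝ)^(k:ℝ))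
        * (H s * ENNReal.ofReal (s^w)) := by
  set c : ℝ := (2:ℝ)^(k:ℝ) with hcdef
  set c2 : ℝ := (2:ℝ)^((k:ℝ)+1) with hc2def
  have hc0 : 0 < c := by positivity
  have hc20 : 0 < c2 := by positivity
  have hc2c : c2 = 2 * c := by
    rw [hc2def, hcdef, Real.rpow_add (by norm_num), Real.rpow_one]; ring
  have hinv1 : (2:ℝ)^(-(k:ℝ)-1) = c2⁻¹ := by
    rw [hc2def, ← Real.rpow_neg (by norm_num)]
    congr 1; ring
  have hinv2 : (2:ℝ)^(-(k:ℝ)) = c⁻¹ := by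
    rw [hcdef, ← Real.rpow_neg (by norm_num)]
  have hiff : ∀ t : ℝ, ((2:ℝ)^(-(k:ℝ)-1)*t < s ∧ s < (2:ℝ)^(-(k:ℝ))*t) ↔ (c*s < t ∧ t < c2*s) := by
    intro t
    rw [hinv1, hinv2, inv_mul_lt_iff₀ hc20, lt_inv_mul_iff₀ hc0]
    exact and_comm
  have hfun : (fun t : ℝ =>
      ({p : ℝ × ℝ | (2:ℝ)^(-(k:ℝ)-1)*p.1 < p.2 ∧ p.2 < (2:ℝ)^(-(k:ℝ))*p.1}.indicator
        (fun q => ENNReal.ofReal (q.1 ^ (w-1)) * H q.2) (t, s)))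
      = (Ioo (c*s) (c2*s)).indicator (fun t => ENNReal.ofReal (t ^ (w-1)) * H s) := by
    funext t
    simp only [Set.indicator_apply, Set.mem_setOf_eq, mem_Ioo]
    exact if_congr (hiff t) rfl rfl
  have hsub : Ioo (c*s) (c2*s) ⊆ Ioi (0:ℝ) := fun u hu =>
    lt_trans (by positivity) hu.1
  rw [hfun, lintegral_indicator measurableSet_Ioo,
    Measure.restrict_restrict measurableSet_Ioo, inter_eq_self_of_subset_left hsub]
  set Cmax : ℝ := max 1 ((2:ℝ)^(w-1)) with hCmaxdef
  have hCmax0 : 0 ≤ Cmax := le_trans zero_le_one (le_max_left _ _)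
  have hpt : ∀ t ∈ Ioo (c*s) (c2*s), t ^ (w-1) ≤ Cmax * (c*s)^(w-1) := by
    intro t htm
    have hcs0 : 0 < c * s := by positivity
    have ht0 : 0 < t := lt_trans hcs0 htm.1
    rcases le_or_gt 0 (w-1) with h | h
    · calc t ^ (w-1) ≤ (c2*s) ^ (w-1) := Real.rpow_le_rpow ht0.le htm.2.le h
      _ = (2:ℝ)^(w-1) * (c*s)^(w-1) := by
          rw [hc2c, show 2*c*s = 2*(c*s) by ring, Real.mul_rpow (by norm_num) hcs0.le]
      _ ≤ Cmax * (c*s)^(w-1) := by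
          exact mul_le_mul_of_nonneg_right (le_max_right _ _) (Real.rpow_nonneg hcs0.le _)
    · calc t ^ (w-1) ≤ (c*s) ^ (w-1) := Real.rpow_le_rpow_of_nonpos hcs0 htm.1.le h.le
      _ ≤ Cmax * (c*s)^(w-1) := by
          exact le_mul_of_one_le_left (Real.rpow_nonneg hcs0.le _) (le_max_left _ _)
  calc ∫⁻ t in Ioo (c*s) (c2*s), ENNReal.ofReal (t ^ (w-1)) * H s
      ≤ ∫⁻ _ in Ioo (c*s) (c2*s), ENNReal.ofReal (Cmax * (c*s)^(w-1)) * H s := by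
        refine setLIntegral_mono measurable_const ?_
        intro t htm
        exact mul_le_mul_left (ENNReal.ofReal_le_ofReal (hpt t htm)) _
  _ = ENNReal.ofReal (Cmax * (c*s)^(w-1)) * H s * (volume (Ioo (c*s) (c2*s))) :=
        setLIntegral_const _ _
  _ = ENNReal.ofReal (Cmax * (c*s)^(w-1)) * ENNReal.ofReal (c*s) * H s := by
        rw [Real.volume_Ioo, show c2*s - c*s = c*s by rw [hc2c]; ring]
        ring
  _ = ENNReal.ofReal (Cmax * (c*s)^(w-1) * (c*s)) * H s := by
        rw [← ENNReal.ofReal_mul (by positivity)]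
  _ ≤ ENNReal.ofReal (Cmax * (2:ℝ)^((k:ℝ)*(w-1)) * (2:ℝ)^(k:ℝ)) * (H s * ENNReal.ofReal (s^w)) := by
        have hre : Cmax * (c*s)^(w-1) * (c*s) = (Cmax * (2:ℝ)^((k:ℝ)*(w-1)) * (2:ℝ)^(k:ℝ)) * s^w := by
          rw [Real.mul_rpow hc0.le hs.le, hcdef, ← Real.rpow_mul (by norm_num)]
          have hsw : s^(w-1) * s = s^w := by
            rw [← Real.rpow_add_one (ne_of_gt hs)]
            norm_num
          calc Cmax * ((2:ℝ)^((k:ℝ)*(w-1)) * s^(w-1)) * ((2:ℝ)^(k:ℝ) * s)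
              = Cmax * (2:ℝ)^((k:ℝ)*(w-1)) * (2:ℝ)^(k:ℝ) * (s^(w-1) * s) := by ring
          _ = Cmax * (2:ℝ)^((k:ℝ)*(w-1)) * (2:ℝ)^(k:ℝ) * s^w := by rw [hsw]
        rw [hre, ENNReal.ofReal_mul (by positivity)]
        ring_nf
        exact le_refl _


/-- Pointwise (in `x`) estimate for the pieces `I_{k,j}` in the proof of tent space maximal
regularity. -/
theorem Ikj_inner_estimate
    (n : ℕ) (hn : 1 ≤ n) (m : ℕ) (hm : 1 ≤ m) (β : ℝ)
    (Q : ℝ → (L2 n →L[ℂ] L2 n)) (M C₀ : ℝ) (hM : 0 < M)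
    (hod : OffDiag n (fun t => t • Q t) M m C₀) :
    ∃ C : ℝ, 0 < C ∧ ∀ f : ℝ → Rn n → ℂ, CcOnPos n f → ∀ x : Rn n, ∀ j k : ℕ, 1 ≤ k →
      ∫⁻ t in Ioi (0:ℝ),
          (∫⁻ y in ball x (t ^ ((m:ℝ)⁻¹)),
            (‖(∫ s in Ioo ((2:ℝ) ^ (-(k:ℝ) - 1) * t) ((2:ℝ) ^ (-(k:ℝ)) * t),
                  Q (t - s) (indL2 (Cann j x (4 * t ^ ((m:ℝ)⁻¹))) (toL2 (f s)))) y‖₊ : ℝ≥0∞) ^ 2)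
            * ENNReal.ofReal (t ^ (β - (n:ℝ)/(m:ℝ)))
        ≤ ENNReal.ofReal (C * 2 ^ (-(k:ℝ) * ((n:ℝ)/(m:ℝ) + 1 - β)) * 2 ^ (-2 * (j:ℝ) * (m:ℝ) * M)) *
            ∫⁻ s in Ioi (0:ℝ),
              (‖indL2 (ball x ((2:ℝ) ^ ((j:ℝ) + (k:ℝ)/(m:ℝ) + 3) * s ^ ((m:ℝ)⁻¹)))
                  (toL2 (f s))‖₊ : ℝ≥0∞) ^ 2 * ENNReal.ofReal (s ^ (β - (n:ℝ)/(m:ℝ))) := by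
  set w : ℝ := β - (n:ℝ)/(m:ℝ) with hwdef
  set C₁ : ℝ := |C₀| + 1 with hC1def
  have hC1pos : 0 < C₁ := by positivity
  set Cmax : ℝ := max 1 ((2:ℝ)^(w-1)) with hCmaxdef
  have hCmax1 : (1:ℝ) ≤ Cmax := le_max_left _ _
  refine ⟨2 * C₁^2 * Cmax, by positivity, ?_⟩
  intro f hf x j k hk
  set pj : ℝ := (2:ℝ) ^ (-((j:ℝ) * (m:ℝ) * M)) with hpjdef
  set K : ℝ := 2 * C₁^2 * pj^2 * (2:ℝ)^(-(k:ℝ)) with hKdef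
  set L : ℝ := Cmax * (2:ℝ)^((k:ℝ)*(w-1)) * (2:ℝ)^(k:ℝ) with hLdef
  set Hfun : ℝ → ℝ≥0∞ := fun s =>
    ∫⁻ y in ball x ((2:ℝ) ^ ((j:ℝ) + (k:ℝ)/(m:ℝ) + 3) * s ^ ((m:ℝ)⁻¹)),
      (‖f s y‖₊ : ℝ≥0∞) ^ 2 ∂(volume : Measure (Rn n)) with hHfundef
  have hHfun_meas : Measurable Hfun := Hmeas hf x _ m
  have hHval : ∀ s : ℝ,
      (‖indL2 (ball x ((2:ℝ) ^ ((j:ℝ) + (k:ℝ)/(m:ℝ) + 3) * s ^ ((m:ℝ)⁻¹)))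
          (toL2 (f s))‖₊ : ℝ≥0∞) ^ 2 = Hfun s := fun s =>
    Hval measurableSet_ball (hf.memLp_slice s)
  set Sset : Set (ℝ × ℝ) :=
    {p : ℝ × ℝ | (2:ℝ)^(-(k:ℝ)-1)*p.1 < p.2 ∧ p.2 < (2:ℝ)^(-(k:ℝ))*p.1} with hSsetdef
  have hSset_meas : MeasurableSet Sset := by
    have h1 : Sset = {p : ℝ × ℝ | (2:ℝ)^(-(k:ℝ)-1)*p.1 < p.2}
        ∩ {p : ℝ × ℝ | p.2 < (2:ℝ)^(-(k:ℝ))*p.1} := rfl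
    rw [h1]
    exact (measurableSet_lt (measurable_fst.const_mul _) measurable_snd).inter
      (measurableSet_lt measurable_snd (measurable_fst.const_mul _))
  set F₁ : ℝ × ℝ → ℝ≥0∞ := fun p =>
    Sset.indicator (fun q => ENNReal.ofReal (q.1 ^ (w-1)) * Hfun q.2) p with hF₁def
  have hF₁_meas : Measurable F₁ := by
    refine Measurable.indicator ?_ hSset_meas
    exact ((measurable_fst.pow measurable_const).ennreal_ofReal).mul
      (hHfun_meas.comp measurable_snd)
  -- rewrite the inner Ioo-integral as an Ioi-integral of F₁
  have hindic : ∀ t : ℝ, 0 < t →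
      (∫⁻ s in Ioi (0:ℝ), F₁ (t, s))
        = ENNReal.ofReal (t ^ (w-1))
          * ∫⁻ s in Ioo ((2:ℝ) ^ (-(k:ℝ) - 1) * t) ((2:ℝ) ^ (-(k:ℝ)) * t),
              (‖indL2 (ball x ((2:ℝ) ^ ((j:ℝ) + (k:ℝ)/(m:ℝ) + 3) * s ^ ((m:ℝ)⁻¹)))
                  (toL2 (f s))‖₊ : ℝ≥0∞) ^ 2 := by
    intro t ht
    have hfun : (fun s : ℝ => F₁ (t, s))
        = (Ioo ((2:ℝ) ^ (-(k:ℝ) - 1) * t) ((2:ℝ) ^ (-(k:ℝ)) * t)).indicator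
            (fun s => ENNReal.ofReal (t ^ (w-1)) * Hfun s) := rfl
    have hsub : Ioo ((2:ℝ) ^ (-(k:ℝ) - 1) * t) ((2:ℝ) ^ (-(k:ℝ)) * t) ⊆ Ioi (0:ℝ) :=
      fun u hu => lt_trans (by positivity) hu.1
    rw [hfun, lintegral_indicator measurableSet_Ioo,
      Measure.restrict_restrict measurableSet_Ioo, inter_eq_self_of_subset_left hsub,
      lintegral_const_mul' _ _ ENNReal.ofReal_ne_top]
    congr 1
    exact lintegral_congr fun s => (hHval s).symm
  calc ∫⁻ t in Ioi (0:ℝ),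
          (∫⁻ y in ball x (t ^ ((m:ℝ)⁻¹)),
            (‖(∫ s in Ioo ((2:ℝ) ^ (-(k:ℝ) - 1) * t) ((2:ℝ) ^ (-(k:ℝ)) * t),
                  Q (t - s) (indL2 (Cann j x (4 * t ^ ((m:ℝ)⁻¹))) (toL2 (f s)))) y‖₊ : ℝ≥0∞) ^ 2)
            * ENNReal.ofReal (t ^ w)
      ≤ ∫⁻ t in Ioi (0:ℝ), ENNReal.ofReal K * ∫⁻ s in Ioi (0:ℝ), F₁ (t, s) := by
        refine lintegral_mono_ae ((ae_restrict_iff' measurableSet_Ioi).2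
          (Filter.Eventually.of_forall ?_))
        intro t ht
        rw [hindic t ht]
        exact per_t hn hm β hM hod hf x j k hk ht
  _ = ENNReal.ofReal K * ∫⁻ t in Ioi (0:ℝ), ∫⁻ s in Ioi (0:ℝ), F₁ (t, s) :=
        lintegral_const_mul' _ _ ENNReal.ofReal_ne_top
  _ = ENNReal.ofReal K * ∫⁻ s in Ioi (0:ℝ), ∫⁻ t in Ioi (0:ℝ), F₁ (t, s) := by
        congr 1
        exact lintegral_lintegral_swap hF₁_meas.aemeasurable
  _ ≤ ENNReal.ofReal K * ∫⁻ s in Ioi (0:ℝ),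
        ENNReal.ofReal L * (Hfun s * ENNReal.ofReal (s^w)) := by
        refine mul_le_mul_right (lintegral_mono_ae ((ae_restrict_iff' measurableSet_Ioi).2
          (Filter.Eventually.of_forall ?_))) _
        intro s hs
        exact tail_bound w k Hfun hs
  _ = ENNReal.ofReal K * (ENNReal.ofReal L
        * ∫⁻ s in Ioi (0:ℝ), Hfun s * ENNReal.ofReal (s^w)) := by
        rw [lintegral_const_mul' _ _ ENNReal.ofReal_ne_top]
  _ = ENNReal.ofReal (2 * C₁^2 * Cmax * 2 ^ (-(k:ℝ) * ((n:ℝ)/(m:ℝ) + 1 - β))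
        * 2 ^ (-2 * (j:ℝ) * (m:ℝ) * M))
        * ∫⁻ s in Ioi (0:ℝ),
            (‖indL2 (ball x ((2:ℝ) ^ ((j:ℝ) + (k:ℝ)/(m:ℝ) + 3) * s ^ ((m:ℝ)⁻¹)))
                (toL2 (f s))‖₊ : ℝ≥0∞) ^ 2 * ENNReal.ofReal (s ^ w) := by
        have e1 : pj^2 = (2:ℝ)^(-2 * (j:ℝ) * (m:ℝ) * M) := by
          rw [hpjdef, pow_two, ← Real.rpow_add (by norm_num)]
          congr 1; ring
        have e2 : (2:ℝ)^(-(k:ℝ)) * ((2:ℝ)^((k:ℝ)*(w-1)) * (2:ℝ)^(k:ℝ))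
            = (2:ℝ)^(-(k:ℝ) * ((n:ℝ)/(m:ℝ) + 1 - β)) := by
          rw [← Real.rpow_add (by norm_num), ← Real.rpow_add (by norm_num)]
          congr 1; rw [hwdef]; ring
        have hKL : K * L = 2 * C₁^2 * Cmax * 2 ^ (-(k:ℝ) * ((n:ℝ)/(m:ℝ) + 1 - β))
            * 2 ^ (-2 * (j:ℝ) * (m:ℝ) * M) := by
          rw [← e2, ← e1, hKdef, hLdef]; ring
        rw [← mul_assoc, ← ENNReal.ofReal_mul (by positivity), hKL]
        congr 1
        exact lintegral_congr fun s => by rw [hHval s]
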